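/- In the cone over the 1-skeleton of a regular tetrahedron inscribed in the unit sphere (the tetrahedral cone), the six planar triangular sheets meet in threes at equal angles of 2π/3 along each of the four rays to the vertices. -/

import Mathlib

open Real

/-- In the cone over the 1-skeleton of the regular tetrahedron inscribed in
the unit sphere (vertices (±1,±1,±1)/√3 with an even number of minus signs' pattern),
the six planar triangular sheets meet in threes at equal angles of 2π/3 along each of the
four rays to the vertices: for each vertex `v k`, the tangent directions of the three
sheets through the ray to `v k` — the projections of the other three vertices onto the
plane orthogonal to `v k` — make pairwise angles 2π/3. -/
theorem tetrahedral_cone_sheets_meet_at_two_pi_div_three :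
    let a : Fin 4 → (Fin 3 → ℝ) := ![![1, 1, 1], ![1, -1, -1], ![-1, 1, -1], ![-1, -1, 1]]
    let v : Fin 4 → EuclideanSpace ℝ (Fin 3) :=
      fun i => (Real.sqrt 3)⁻¹ • (WithLp.equiv 2 (Fin 3 → ℝ)).symm (a i)
    -- projection of v i to the plane orthogonal to the ray through v k
    let w : Fin 4 → Fin 4 → EuclideanSpace ℝ (Fin 3) :=
      fun k i => v i - (inner ℝ (v i) (v k) : ℝ) • v k
    ∀ k i j : Fin 4, i ≠ k → j ≠ k → i ≠ j →
      InnerProductGeometry.angle (w k i) (w k j) = 2 * π / 3 := by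
  intro a v w k i j hik hjk hij
  have h3 : (Real.sqrt 3)⁻¹ * (Real.sqrt 3)⁻¹ = 3⁻¹ := by
    rw [← mul_inv, Real.mul_self_sqrt (by norm_num : (0:ℝ) ≤ 3)]
  have hinner : ∀ p q : Fin 4, (inner ℝ (v p) (v q) : ℝ) = if p = q then 1 else -(1/3) := by
    intro p q
    simp only [v, real_inner_smul_left, real_inner_smul_right]
    rw [← mul_assoc, h3]
    have : (inner ℝ ((WithLp.equiv 2 (Fin 3 → ℝ)).symm (a p))
        ((WithLp.equiv 2 (Fin 3 → ℝ)).symm (a q)) : ℝ) =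
        a p 0 * a q 0 + a p 1 * a q 1 + a p 2 * a q 2 := by
      simp [PiLp.inner_apply, Fin.sum_univ_three]; ring
    rw [this]
    fin_cases p <;> fin_cases q <;> norm_num [a, Fin.ext_iff, Matrix.cons_val_two, Matrix.tail_cons, Matrix.head_cons]
  have hww : ∀ p q : Fin 4, p ≠ k → q ≠ k →
      (inner ℝ (w k p) (w k q) : ℝ) = if p = q then 8/9 else -(4/9) := by
    intro p q hp hq
    simp only [w, inner_sub_sub_self, real_inner_smul_left, real_inner_smul_right,
      inner_sub_left, inner_sub_right, hinner, if_neg hp, if_neg hq,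
      if_neg (Ne.symm hp), if_neg (Ne.symm hq), if_pos rfl]
    by_cases h : p = q <;> simp [h] <;> norm_num
  have hn : ∀ p : Fin 4, p ≠ k → ‖w k p‖ = Real.sqrt (8/9) := by
    intro p hp
    rw [← Real.sqrt_sq (norm_nonneg _), ← real_inner_self_eq_norm_sq]
    rw [hww p p hp hp, if_pos rfl]
  rw [InnerProductGeometry.angle, hww i j hik hjk, if_neg hij, hn i hik, hn j hjk]
  have : Real.sqrt (8/9) * Real.sqrt (8/9) = 8/9 := Real.mul_self_sqrt (by norm_num)
  rw [this]
  have : (-(4/9) : ℝ) / (8/9) = -(1/2) := by norm_num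
  rw [this, show (-(1/2) : ℝ) = -(Real.cos (π/3)) by rw [Real.cos_pi_div_three],
    Real.arccos_neg, Real.arccos_cos (by positivity)
      (by linarith [Real.pi_pos])]
  ring
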